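/- (FDR control under arbitrary dependence.) Let H be a finite set, Λ : H → ℝ>0, π : H → [0,1], α > 0, ν a probability measure on (0,∞), and β_ν(r) = ∫_0^r x dν(x). Let (p_h)_{h∈H} be arbitrary [0,1]-valued random variables with P(p_h ≤ t) ≤ t for all t ∈ [0,1] and h ∈ H₀ (no independence or positive-dependence assumption). Let R be the step-up procedure associated to Δ(h,r) = α π(h) β_ν(r). Then FDR(R) ≤ α · Σ_{h∈H₀} Λ(h) π(h). -/

import Mathlib

open MeasureTheory ENNReal Set Finset

lemma lint_Ioi_inv_sq {a : ℝ} (ha : 0 < a) :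
    ∫⁻ u in Set.Ioi a, ENNReal.ofReal ((u^2)⁻¹) = ENNReal.ofReal a⁻¹ := by
  have h1 : ∫ u in Set.Ioi a, u ^ (-2:ℝ) = a⁻¹ := by
    rw [integral_Ioi_rpow_of_lt (by norm_num) ha]
    norm_num
    rw [Real.rpow_neg_one]
  calc ∫⁻ u in Set.Ioi a, ENNReal.ofReal ((u^2)⁻¹)
      = ∫⁻ u in Set.Ioi a, ENNReal.ofReal (u ^ (-2:ℝ)) := by
        apply setLIntegral_congr_fun measurableSet_Ioi
        intro u hu
        beta_reduce
        have hu0 : 0 < u := ha.trans hu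
        rw [Real.rpow_neg hu0.le, ← Real.rpow_natCast u 2]
        norm_num
    _ = ENNReal.ofReal (∫ u in Set.Ioi a, u ^ (-2:ℝ)) := by
        rw [ofReal_integral_eq_lintegral_ofReal
          (integrableOn_Ioi_rpow_of_lt (by norm_num) ha)]
        filter_upwards [ae_restrict_mem measurableSet_Ioi] with u hu
        exact Real.rpow_nonneg (ha.trans hu).le _
    _ = ENNReal.ofReal a⁻¹ := by rw [h1]


/-- Theorem 4.2: under arbitrary (unspecified) dependence of the p-values, the
step-up procedure associated to the threshold collection
`Δ(h,r) = α π(h) β_ν(r)`, with `β_ν(r) = ∫_{(0,r]} x dν(x)` for a probability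
measure `ν` on `(0,∞)`, has its Λ-weighted FDR bounded by
`α Σ_{h∈H₀} Λ(h) π(h)`. -/
theorem FDR_control_step_up_arbitrary_dependence
    {Ω : Type*} [MeasurableSpace Ω] (P : Measure Ω) [IsProbabilityMeasure P]
    {ι : Type*} [Fintype ι] [DecidableEq ι]
    (H₀ : Finset ι) (Λ : ι → ℝ) (hΛ : ∀ h, 0 < Λ h)
    (π : ι → ℝ) (hπ : ∀ h, π h ∈ Set.Icc (0:ℝ) 1) (α : ℝ) (hα : 0 < α)
    (ν : Measure ℝ) [IsProbabilityMeasure ν] (hν : ν (Set.Iic 0) = 0)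
    (β : ℝ → ℝ) (hβ : ∀ r : ℝ, β r = ∫ x in Set.Ioc 0 r, x ∂ν)
    (p : ι → Ω → ℝ) (hp : ∀ h, Measurable (p h))
    (hprange : ∀ h ω, p h ω ∈ Set.Icc (0:ℝ) 1)
    (hUnif : ∀ h ∈ H₀, ∀ t : ℝ, 0 ≤ t → t ≤ 1 →
      P {ω | p h ω ≤ t} ≤ ENNReal.ofReal t)
    -- R is the step-up procedure for the threshold collection Δ(h,r) = α π(h) β_ν(r)
    (rhat : Ω → ℝ) (R : Ω → Finset ι)
    (hR : ∀ ω, R ω = Finset.univ.filter (fun h => p h ω ≤ α * π h * β (rhat ω)))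
    (hrhat0 : ∀ ω, 0 ≤ rhat ω)
    (hrhatmem : ∀ ω, rhat ω ≤
      ∑ h ∈ Finset.univ.filter (fun h => p h ω ≤ α * π h * β (rhat ω)), Λ h)
    (hrhatmax : ∀ ω, ∀ r : ℝ, 0 ≤ r →
      r ≤ ∑ h ∈ Finset.univ.filter (fun h => p h ω ≤ α * π h * β r), Λ h →
      r ≤ rhat ω) :
    ∫⁻ ω, ENNReal.ofReal
        (if 0 < ∑ g ∈ R ω, Λ g
          then (∑ g ∈ R ω ∩ H₀, Λ g) / (∑ g ∈ R ω, Λ g) else 0) ∂P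
      ≤ ENNReal.ofReal (α * ∑ h ∈ H₀, Λ h * π h) := by
  -- basic facts about β
  have hβint : ∀ u : ℝ, IntegrableOn (fun x => x) (Set.Ioc 0 u) ν := by
    intro u
    apply Integrable.mono' (integrable_const (max u 0))
      measurable_id.aestronglyMeasurable
    filter_upwards [ae_restrict_mem measurableSet_Ioc] with x hx
    simp only [id, Real.norm_eq_abs, abs_of_pos hx.1]
    exact le_max_of_le_left hx.2
  have hβ0 : ∀ u, 0 ≤ β u := by
    intro u; rw [hβ]
    exact setIntegral_nonneg measurableSet_Ioc (fun x hx => hx.1.le)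
  have hβmono : Monotone β := by
    intro u v huv; rw [hβ, hβ]
    apply setIntegral_mono_set (hβint v)
    · filter_upwards [ae_restrict_mem measurableSet_Ioc] with x hx
      exact hx.1.le
    · exact HasSubset.Subset.eventuallyLE (Set.Ioc_subset_Ioc_right huv)
  have hβmeas : Measurable β := hβmono.measurable
  have hβofReal : ∀ u, ENNReal.ofReal (β u)
      = ∫⁻ x in Set.Ioc 0 u, ENNReal.ofReal x ∂ν := by
    intro u
    rw [hβ, ofReal_integral_eq_lintegral_ofReal (hβint u)]
    filter_upwards [ae_restrict_mem measurableSet_Ioc] with x hx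
    exact hx.1.le
  have hcnn : ∀ h : ι, 0 ≤ α * π h := fun h => mul_nonneg hα.le (hπ h).1
  -- rhat equals the total weight of R
  have hrhat_eq : ∀ ω, rhat ω = ∑ g ∈ R ω, Λ g := by
    intro ω
    set s := ∑ h ∈ Finset.univ.filter (fun h => p h ω ≤ α * π h * β (rhat ω)), Λ h
      with hs
    have h1 : rhat ω ≤ s := hrhatmem ω
    have hs0 : 0 ≤ s := Finset.sum_nonneg fun h _ => (hΛ h).le
    have h2 : s ≤ rhat ω := by
      apply hrhatmax ω s hs0
      rw [hs]
      apply Finset.sum_le_sum_of_subset_of_nonneg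
      · intro h hh
        simp only [Finset.mem_filter, Finset.mem_univ, true_and] at hh ⊢
        exact hh.trans (mul_le_mul_of_nonneg_left (hβmono h1) (hcnn h))
      · intro h _ _; exact (hΛ h).le
    rw [hR]; linarith
  -- the comparison function
  set w : ℝ → ℝ≥0∞ := fun u => ENNReal.ofReal ((u^2)⁻¹) with hw
  set G : ι → ℝ → ℝ≥0∞ := fun h t =>
    ∫⁻ u in Set.Ioi (0:ℝ), if t ≤ α * π h * β u then w u else 0 with hG
  have hGanti : ∀ h, Antitone (G h) := by
    intro h t t' htt'
    apply lintegral_mono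
    intro u
    dsimp only
    split_ifs with h1 h2
    · exact le_rfl
    · exact absurd (htt'.trans h1) h2
    · exact zero_le
    · exact le_rfl
  have hGmeas : ∀ h, Measurable (fun ω => G h (p h ω)) := fun h =>
    ((hGanti h).measurable).comp (hp h)
  -- pointwise bound on the FDP
  have hpoint : ∀ ω, ENNReal.ofReal
      (if 0 < ∑ g ∈ R ω, Λ g
        then (∑ g ∈ R ω ∩ H₀, Λ g) / (∑ g ∈ R ω, Λ g) else 0)
      ≤ ∑ h ∈ H₀, ENNReal.ofReal (Λ h) * G h (p h ω) := by
    intro ω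
    by_cases hS : 0 < ∑ g ∈ R ω, Λ g
    · rw [if_pos hS]
      have hre : (∑ g ∈ R ω ∩ H₀, Λ g) / (∑ g ∈ R ω, Λ g)
          = ∑ h ∈ H₀, (if h ∈ R ω then Λ h / (∑ g ∈ R ω, Λ g) else 0) := by
        rw [Finset.inter_comm, ← Finset.filter_mem_eq_inter, Finset.sum_filter,
          Finset.sum_div]
        apply Finset.sum_congr rfl
        intro h _
        split_ifs
        · rfl
        · exact zero_div _
      have hnn : ∀ h ∈ H₀,
          (0:ℝ) ≤ if h ∈ R ω then Λ h / (∑ g ∈ R ω, Λ g) else 0 := by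
        intro h _
        split_ifs
        · exact div_nonneg (hΛ h).le hS.le
        · exact le_rfl
      rw [hre, ENNReal.ofReal_sum_of_nonneg hnn]
      apply Finset.sum_le_sum
      intro h hh
      by_cases hmem : h ∈ R ω
      · rw [if_pos hmem, div_eq_mul_inv, ENNReal.ofReal_mul (hΛ h).le,
          ENNReal.ofReal_inv_of_pos hS]
        apply mul_le_mul_right
        have hrS : rhat ω = ∑ g ∈ R ω, Λ g := hrhat_eq ω
        have hrpos : 0 < rhat ω := by rw [hrS]; exact hS
        have hpm : p h ω ≤ α * π h * β (rhat ω) := by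
          have := hmem
          rw [hR] at this
          exact (Finset.mem_filter.mp this).2
        calc (ENNReal.ofReal (∑ g ∈ R ω, Λ g))⁻¹
            = ENNReal.ofReal (rhat ω)⁻¹ := by
              rw [← hrS, ← ENNReal.ofReal_inv_of_pos hrpos]
          _ = ∫⁻ u in Set.Ioi (rhat ω), w u := (lint_Ioi_inv_sq hrpos).symm
          _ = ∫⁻ u in Set.Ioi (rhat ω),
                (if p h ω ≤ α * π h * β u then w u else 0) := by
              apply setLIntegral_congr_fun measurableSet_Ioi
              intro u hu
              beta_reduce
              rw [if_pos (hpm.trans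
                (mul_le_mul_of_nonneg_left (hβmono (le_of_lt hu)) (hcnn h)))]
          _ ≤ G h (p h ω) := by
              rw [hG]
              exact lintegral_mono_set (Set.Ioi_subset_Ioi hrpos.le)
      · rw [if_neg hmem]
        simp
    · rw [if_neg hS]
      simp
  -- per-hypothesis integral bound
  have hwmeas : Measurable w := by
    rw [hw]
    exact ((measurable_id.pow_const 2).inv).ennreal_ofReal
  have hkey : ∀ h ∈ H₀, ∫⁻ ω, G h (p h ω) ∂P ≤ ENNReal.ofReal (α * π h) := by
    intro h hh
    have hPb : ∀ u : ℝ, P {ω | p h ω ≤ α * π h * β u}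
        ≤ ENNReal.ofReal (α * π h * β u) := by
      intro u
      by_cases h1 : α * π h * β u ≤ 1
      · exact hUnif h hh _ (mul_nonneg (hcnn h) (hβ0 u)) h1
      · calc P {ω | p h ω ≤ α * π h * β u} ≤ 1 := prob_le_one
          _ ≤ ENNReal.ofReal (α * π h * β u) :=
            ENNReal.one_le_ofReal.mpr (le_of_not_ge h1)
    have hx_ae : ∀ᵐ x ∂ν, 0 < x := by
      rw [ae_iff]
      have : {x : ℝ | ¬ 0 < x} = Set.Iic 0 := by ext x; simp [not_lt]
      rw [this]; exact hν
    calc ∫⁻ ω, G h (p h ω) ∂P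
        = ∫⁻ u in Set.Ioi (0:ℝ),
            ∫⁻ ω, (if p h ω ≤ α * π h * β u then w u else 0) ∂P := by
          rw [hG]
          apply lintegral_lintegral_swap
          apply Measurable.aemeasurable
          apply Measurable.ite ?_ (hwmeas.comp measurable_snd) measurable_const
          exact measurableSet_le ((hp h).comp measurable_fst)
            (((hβmeas.comp measurable_snd)).const_mul _)
      _ = ∫⁻ u in Set.Ioi (0:ℝ),
            w u * P {ω | p h ω ≤ α * π h * β u} := by
          apply lintegral_congr
          intro u
          have : (fun ω => if p h ω ≤ α * π h * β u then w u else 0)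
              = Set.indicator {ω | p h ω ≤ α * π h * β u} (fun _ => w u) := by
            ext ω
            rw [Set.indicator_apply]
            rfl
          rw [this, lintegral_indicator (measurableSet_le (hp h) measurable_const),
            setLIntegral_const]
      _ ≤ ∫⁻ u in Set.Ioi (0:ℝ),
            ENNReal.ofReal (α * π h) * (w u * ENNReal.ofReal (β u)) := by
          apply lintegral_mono
          intro u
          dsimp only
          calc w u * P {ω | p h ω ≤ α * π h * β u}
              ≤ w u * ENNReal.ofReal (α * π h * β u) :=
                mul_le_mul_right (hPb u) _
            _ = ENNReal.ofReal (α * π h) * (w u * ENNReal.ofReal (β u)) := by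
                rw [ENNReal.ofReal_mul (hcnn h)]
                ring
      _ = ENNReal.ofReal (α * π h)
            * ∫⁻ u in Set.Ioi (0:ℝ), w u * ENNReal.ofReal (β u) := by
          exact lintegral_const_mul' _ _ ENNReal.ofReal_ne_top
      _ ≤ ENNReal.ofReal (α * π h) * 1 := by
          apply mul_le_mul_right
          have hmain : ∫⁻ u in Set.Ioi (0:ℝ), w u * ENNReal.ofReal (β u) = 1 := by
            calc ∫⁻ u in Set.Ioi (0:ℝ), w u * ENNReal.ofReal (β u)
                = ∫⁻ u in Set.Ioi (0:ℝ),
                    ∫⁻ x, (if x ∈ Set.Ioc 0 u then w u * ENNReal.ofReal x else 0) ∂ν := by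
                  apply lintegral_congr
                  intro u
                  rw [hβofReal u, ← lintegral_const_mul _ measurable_ofReal,
                    ← lintegral_indicator measurableSet_Ioc]
                  apply lintegral_congr
                  intro x
                  rw [Set.indicator_apply]
              _ = ∫⁻ x, (∫⁻ u in Set.Ioi (0:ℝ),
                    (if x ∈ Set.Ioc 0 u then w u * ENNReal.ofReal x else 0)) ∂ν := by
                  apply lintegral_lintegral_swap
                  apply Measurable.aemeasurable
                  apply Measurable.ite
                  · have : {q : ℝ × ℝ | q.2 ∈ Set.Ioc 0 q.1}
                        = {q : ℝ × ℝ | 0 < q.2} ∩ {q : ℝ × ℝ | q.2 ≤ q.1} := by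
                      ext q; simp [Set.mem_Ioc, and_comm]
                    rw [this]
                    exact (measurableSet_lt measurable_const measurable_snd).inter
                      (measurableSet_le measurable_snd measurable_fst)
                  · exact (hwmeas.comp measurable_fst).mul
                      (measurable_snd.ennreal_ofReal)
                  · exact measurable_const
              _ = ∫⁻ _x, (1:ℝ≥0∞) ∂ν := by
                  apply lintegral_congr_ae
                  filter_upwards [hx_ae] with x hx
                  have heq : (fun u => if x ∈ Set.Ioc 0 u then w u * ENNReal.ofReal x else 0)
                      = Set.indicator (Set.Ici x) (fun u => w u * ENNReal.ofReal x) := by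
                    ext u
                    rw [Set.indicator_apply]
                    simp [Set.mem_Ioc, Set.mem_Ici, hx]
                  have hIci : Set.Ici x ∩ Set.Ioi 0 = Set.Ici x :=
                    Set.inter_eq_left.mpr (fun y hy => lt_of_lt_of_le hx hy)
                  rw [heq, lintegral_indicator measurableSet_Ici,
                    Measure.restrict_restrict measurableSet_Ici, hIci,
                    lintegral_mul_const _ hwmeas,
                    setLIntegral_congr (MeasureTheory.Ioi_ae_eq_Ici (a := x)).symm,
                    hw, lint_Ioi_inv_sq hx,
                    ← ENNReal.ofReal_mul (inv_nonneg.mpr hx.le),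
                    inv_mul_cancel₀ hx.ne', ENNReal.ofReal_one]
              _ = 1 := by rw [lintegral_one, measure_univ]
          rw [hmain]
      _ = ENNReal.ofReal (α * π h) := mul_one _
  -- assembly
  calc ∫⁻ ω, ENNReal.ofReal
        (if 0 < ∑ g ∈ R ω, Λ g
          then (∑ g ∈ R ω ∩ H₀, Λ g) / (∑ g ∈ R ω, Λ g) else 0) ∂P
      ≤ ∫⁻ ω, ∑ h ∈ H₀, ENNReal.ofReal (Λ h) * G h (p h ω) ∂P :=
        lintegral_mono hpoint
    _ = ∑ h ∈ H₀, ∫⁻ ω, ENNReal.ofReal (Λ h) * G h (p h ω) ∂P :=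
        lintegral_finset_sum _ (fun h _ => (hGmeas h).const_mul _)
    _ = ∑ h ∈ H₀, ENNReal.ofReal (Λ h) * ∫⁻ ω, G h (p h ω) ∂P := by
        apply Finset.sum_congr rfl
        intro h _
        exact lintegral_const_mul _ (hGmeas h)
    _ ≤ ∑ h ∈ H₀, ENNReal.ofReal (Λ h) * ENNReal.ofReal (α * π h) :=
        Finset.sum_le_sum (fun h hh => mul_le_mul_right (hkey h hh) _)
    _ = ENNReal.ofReal (α * ∑ h ∈ H₀, Λ h * π h) := by
        have : ∀ h ∈ H₀, ENNReal.ofReal (Λ h) * ENNReal.ofReal (α * π h)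
            = ENNReal.ofReal (α * (Λ h * π h)) := by
          intro h _
          rw [← ENNReal.ofReal_mul (hΛ h).le]
          ring_nf
        rw [Finset.sum_congr rfl this,
          ← ENNReal.ofReal_sum_of_nonneg
            (fun h _ => mul_nonneg hα.le (mul_nonneg (hΛ h).le (hπ h).1)),
          ← Finset.mul_sum]
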